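/- Fix τ > 2 and ε ∈ (0, 1/(2τ−1)), and let d₁,…,dₙ be i.i.d. copies of D. Then there exist constants c₁, c₂ > 0 depending only on τ such that for all sufficiently large n, with probability at least 1 − exp(−n^{ε/3}), for every integer i with ⌈n^ε⌉ ≤ i ≤ n one has c₁·(n/i)^{1/(τ−1)} ≤ d^{(i)} ≤ c₂·(n/i)^{1/(τ−1)}. -/

import Mathlib

open MeasureTheory ProbabilityTheory

/-- The normalizing constant `C_τ = (∑_{j ≥ 3} j^{-τ})⁻¹` of the power-law distribution. -/
noncomputable def Ctau (τ : ℝ) : ℝ := (∑' j : ℕ, if 3 ≤ j then (j : ℝ) ^ (-τ) else 0)⁻¹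

/-- The `i`-th order statistic (nonincreasing rearrangement) of `d₁, …, dₙ`:
`d⁽ⁱ⁾` is the largest `x` such that at least `i` of the values `dⱼ` satisfy `dⱼ ≥ x`. -/
noncomputable def orderStat (n : ℕ) (d : Fin n → ℕ) (i : ℕ) : ℕ :=
  sSup {x : ℕ | i ≤ (Finset.univ.filter fun j : Fin n => x ≤ d j).card}

open Filter

lemma rpow_diff_bounds {τ : ℝ} (hτ : 1 < τ) {x : ℝ} (hx : 1 ≤ x) :
    (τ - 1) * (x+1) ^ (-τ) ≤ x ^ (1-τ) - (x+1) ^ (1-τ) ∧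
    x ^ (1-τ) - (x+1) ^ (1-τ) ≤ (τ - 1) * x ^ (-τ) := by
  have hx0 : (0:ℝ) < x := lt_of_lt_of_le one_pos hx
  have hcont : ContinuousOn (fun t : ℝ => t ^ (1-τ)) (Set.Icc x (x+1)) := by
    intro t ht
    exact (Real.continuousAt_rpow_const t _ (Or.inl (by nlinarith [ht.1] : t ≠ 0))).continuousWithinAt
  have hderiv : ∀ t ∈ Set.Ioo x (x+1),
      HasDerivAt (fun t : ℝ => t ^ (1-τ)) ((1-τ) * t ^ (-τ)) t := by
    intro t ht
    have h := Real.hasDerivAt_rpow_const (p := 1-τ) (Or.inl (by nlinarith [ht.1] : t ≠ 0))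
    convert h using 2
    ring
  obtain ⟨c, hc, hceq⟩ := exists_hasDerivAt_eq_slope (fun t : ℝ => t ^ (1-τ))
    (fun t => (1-τ) * t ^ (-τ)) (by linarith : x < x + 1) hcont hderiv
  have hc0 : (0:ℝ) < c := lt_trans hx0 hc.1
  have hkey : x ^ (1-τ) - (x+1) ^ (1-τ) = (τ-1) * c ^ (-τ) := by
    have : (x + 1) - x = 1 := by ring
    rw [this, div_one] at hceq
    nlinarith [hceq]
  constructor
  · rw [hkey]
    have : (x+1) ^ (-τ) ≤ c ^ (-τ) :=
      Real.rpow_le_rpow_of_nonpos hc0 (le_of_lt hc.2) (by linarith)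
    nlinarith
  · rw [hkey]
    have : c ^ (-τ) ≤ x ^ (-τ) :=
      Real.rpow_le_rpow_of_nonpos hx0 (le_of_lt hc.1) (by linarith)
    nlinarith

lemma hasSum_tail_telescope {τ : ℝ} (hτ : 1 < τ) (x : ℕ) (hx : 1 ≤ x) :
    HasSum (fun k : ℕ => ((x:ℝ)+k) ^ (1-τ) - ((x:ℝ)+k+1) ^ (1-τ)) ((x:ℝ) ^ (1-τ)) := by
  have hxR : (1:ℝ) ≤ (x:ℝ) := by exact_mod_cast hx
  have hnonneg : ∀ k : ℕ, 0 ≤ ((x:ℝ)+k) ^ (1-τ) - ((x:ℝ)+k+1) ^ (1-τ) := by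
    intro k
    have h1 : (0:ℝ) < (x:ℝ)+k := by positivity
    have := Real.rpow_le_rpow_of_nonpos h1 (by linarith : (x:ℝ)+k ≤ (x:ℝ)+k+1)
      (by linarith : 1-τ ≤ 0)
    linarith
  rw [hasSum_iff_tendsto_nat_of_nonneg hnonneg]
  have hps : ∀ n : ℕ, ∑ k ∈ Finset.range n, (((x:ℝ)+k) ^ (1-τ) - ((x:ℝ)+k+1) ^ (1-τ))
      = (x:ℝ) ^ (1-τ) - ((x:ℝ)+n) ^ (1-τ) := by
    intro n
    have := Finset.sum_range_sub' (f := fun k : ℕ => ((x:ℝ)+k) ^ (1-τ)) n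
    simp only [Nat.cast_zero, add_zero, Nat.cast_add, Nat.cast_one] at this
    rw [← this]
    apply Finset.sum_congr rfl
    intro k _
    congr 2
    push_cast
    ring
  simp only [hps]
  have h0 : Tendsto (fun n : ℕ => ((x:ℝ)+n) ^ (1-τ)) atTop (nhds 0) := by
    have h1 : Tendsto (fun n : ℕ => (x:ℝ)+n) atTop atTop :=
      tendsto_atTop_add_const_left _ _ tendsto_natCast_atTop_atTop
    have h2 : Tendsto (fun t : ℝ => t ^ (-(τ-1))) atTop (nhds 0) :=
      tendsto_rpow_neg_atTop (by linarith)
    have := h2.comp h1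
    convert this using 2
    norm_num
  have := tendsto_const_nhds (x := (x:ℝ) ^ (1-τ)) (f := atTop (α := ℕ)) |>.sub h0
  simpa using this

lemma tail_sum_bounds {τ : ℝ} (hτ : 1 < τ) (x : ℕ) (hx : 1 ≤ x) :
    Summable (fun k : ℕ => ((x:ℝ)+k) ^ (-τ)) ∧
    (τ-1)⁻¹ * (x:ℝ) ^ (1-τ) ≤ ∑' k : ℕ, ((x:ℝ)+k) ^ (-τ) ∧
    ∑' k : ℕ, ((x:ℝ)+k) ^ (-τ) ≤ (1 + (τ-1)⁻¹) * (x:ℝ) ^ (1-τ) := by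
  have hxR : (1:ℝ) ≤ (x:ℝ) := by exact_mod_cast hx
  have hτ1 : (0:ℝ) < τ - 1 := by linarith
  have hbase : ∀ k : ℕ, (1:ℝ) ≤ (x:ℝ)+k := fun k => by
    have : (0:ℝ) ≤ (k:ℝ) := Nat.cast_nonneg k
    linarith
  have hdb := fun k : ℕ => rpow_diff_bounds hτ (hbase k)
  have hS : Summable (fun k : ℕ => ((x:ℝ)+k) ^ (-τ)) := by
    have h1 : Summable (fun n : ℕ => (n:ℝ) ^ (-τ)) :=
      Real.summable_nat_rpow.mpr (by linarith)
    have h2 := (summable_nat_add_iff x).mpr h1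
    apply h2.congr
    intro k
    congr 1
    push_cast
    ring
  have htel := hasSum_tail_telescope hτ x hx
  refine ⟨hS, ?_, ?_⟩
  · have hmul := htel.mul_left (τ-1)⁻¹
    rw [← hmul.tsum_eq]
    apply Summable.tsum_le_tsum _ (hmul.summable) hS
    intro k
    have := (hdb k).2
    rw [inv_mul_le_iff₀ hτ1]
    exact this
  · have hsplit := Summable.tsum_eq_zero_add hS
    have hshift : Summable (fun k : ℕ => ((x:ℝ)+(k+1)) ^ (-τ)) := by
      have := (summable_nat_add_iff 1).mpr hS
      apply this.congr
      intro k
      push_cast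
      ring_nf
    have hmul := (hasSum_tail_telescope hτ x hx).mul_left (τ-1)⁻¹
    have hle : ∑' k : ℕ, ((x:ℝ)+(k+1)) ^ (-τ) ≤ (τ-1)⁻¹ * (x:ℝ) ^ (1-τ) := by
      rw [← hmul.tsum_eq]
      apply Summable.tsum_le_tsum _ hshift hmul.summable
      intro k
      rw [le_inv_mul_iff₀ hτ1]
      have e : (x:ℝ)+((k:ℝ)+1) = (x:ℝ)+(k:ℝ)+1 := by ring
      rw [e]
      exact (hdb k).1
    have hpow : (x:ℝ) ^ (-τ) ≤ (x:ℝ) ^ (1-τ) :=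
      Real.rpow_le_rpow_of_exponent_le hxR (by linarith)
    have hf0 : ((x:ℝ)+(0:ℕ)) ^ (-τ) = (x:ℝ) ^ (-τ) := by norm_num
    rw [hsplit]
    have : ∑' k : ℕ, ((x:ℝ)+(k+1:ℕ)) ^ (-τ) = ∑' k : ℕ, ((x:ℝ)+((k:ℝ)+1)) ^ (-τ) := by
      apply tsum_congr; intro k; push_cast; ring_nf
    rw [hf0, this]
    nlinarith [hle, hpow]


lemma Ctau_pos {τ : ℝ} (hτ : 1 < τ) : 0 < Ctau τ := by
  rw [Ctau]
  apply inv_pos.mpr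
  have hsum : Summable (fun j : ℕ => if 3 ≤ j then (j : ℝ) ^ (-τ) else 0) := by
    apply Summable.of_nonneg_of_le (fun j => ?_) (fun j => ?_)
      (Real.summable_nat_rpow.mpr (by linarith : -τ < -1))
    · split <;> [exact Real.rpow_nonneg (Nat.cast_nonneg _) _; exact le_rfl]
    · split
      · exact le_rfl
      · exact Real.rpow_nonneg (Nat.cast_nonneg _) _
  have h3 : (0:ℝ) < (if 3 ≤ (3:ℕ) then ((3:ℕ) : ℝ) ^ (-τ) else 0) := by
    norm_num
    positivity
  calc (0:ℝ) < _ := h3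
    _ ≤ _ := Summable.le_tsum hsum 3 (fun j _ => by
        split
        · exact Real.rpow_nonneg (Nat.cast_nonneg _) _
        · exact le_rfl)

lemma tailProb_eq {τ : ℝ} {Ω : Type} [MeasurableSpace Ω] (P : Measure Ω)
    (Y : Ω → ℕ) (hY : Measurable Y)
    (hpmf : ∀ k : ℕ, 3 ≤ k → P {ω | Y ω = k} = ENNReal.ofReal (Ctau τ * (k : ℝ) ^ (-τ)))
    (x : ℕ) (hx : 3 ≤ x) :
    P {ω | x ≤ Y ω} = ∑' k : ℕ, ENNReal.ofReal (Ctau τ * ((x:ℝ)+(k:ℝ)) ^ (-τ)) := by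
  have hset : {ω | x ≤ Y ω} = ⋃ k : ℕ, {ω | Y ω = x + k} := by
    ext ω
    simp only [Set.mem_setOf_eq, Set.mem_iUnion]
    constructor
    · intro h; exact ⟨Y ω - x, by omega⟩
    · rintro ⟨k, hk⟩; omega
  rw [hset, measure_iUnion]
  · apply tsum_congr
    intro k
    rw [hpmf (x + k) (by omega)]
    congr 2
    push_cast
    ring
  · intro k₁ k₂ hne
    simp only [Set.disjoint_left, Set.mem_setOf_eq]
    intro ω h1 h2
    omega
  · intro k
    exact hY (measurableSet_singleton _)

lemma tailProb_bounds {τ : ℝ} (hτ : 2 < τ) {Ω : Type} [MeasurableSpace Ω] (P : Measure Ω)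
    (Y : Ω → ℕ) (hY : Measurable Y)
    (hpmf : ∀ k : ℕ, 3 ≤ k → P {ω | Y ω = k} = ENNReal.ofReal (Ctau τ * (k : ℝ) ^ (-τ)))
    (x : ℕ) (hx : 3 ≤ x) :
    ENNReal.ofReal (Ctau τ * (τ-1)⁻¹ * (x:ℝ) ^ (1-τ)) ≤ P {ω | x ≤ Y ω} ∧
    P {ω | x ≤ Y ω} ≤ ENNReal.ofReal (Ctau τ * (1 + (τ-1)⁻¹) * (x:ℝ) ^ (1-τ)) := by
  have hτ1 : (1:ℝ) < τ := by linarith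
  have hC := Ctau_pos hτ1
  obtain ⟨hS, hlow, hup⟩ := tail_sum_bounds hτ1 x (by omega)
  have heq : P {ω | x ≤ Y ω} = ENNReal.ofReal (Ctau τ * ∑' k : ℕ, ((x:ℝ)+(k:ℝ)) ^ (-τ)) := by
    rw [tailProb_eq P Y hY hpmf x hx]
    rw [← ENNReal.ofReal_tsum_of_nonneg (fun k => ?_) (hS.mul_left _)]
    · rw [tsum_mul_left]
    · exact mul_nonneg hC.le (Real.rpow_nonneg (by positivity) _)
  rw [heq]
  constructor
  · apply ENNReal.ofReal_le_ofReal
    rw [mul_assoc]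
    exact mul_le_mul_of_nonneg_left hlow hC.le
  · apply ENNReal.ofReal_le_ofReal
    rw [mul_assoc]
    exact mul_le_mul_of_nonneg_left hup hC.le

lemma lt_three_null {Ω : Type} [MeasurableSpace Ω] (P : Measure Ω)
    (Y : Ω → ℕ) (hlow : ∀ k : ℕ, k < 3 → P {ω | Y ω = k} = 0) :
    P {ω | Y ω < 3} = 0 := by
  have : {ω | Y ω < 3} = {ω | Y ω = 0} ∪ {ω | Y ω = 1} ∪ {ω | Y ω = 2} := by
    ext ω; simp only [Set.mem_setOf_eq, Set.mem_union]; omega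
  rw [this]
  refine measure_union_null (measure_union_null ?_ ?_) ?_ <;>
    [exact hlow 0 (by norm_num); exact hlow 1 (by norm_num); exact hlow 2 (by norm_num)]

lemma orderStat_ge {n : ℕ} (d : Fin n → ℕ) {i x : ℕ} (hi : 1 ≤ i)
    (h : i ≤ (Finset.univ.filter fun j : Fin n => x ≤ d j).card) :
    x ≤ orderStat n d i := by
  apply le_csSup
  · refine ⟨Finset.univ.sup d, ?_⟩
    intro y hy
    simp only [Set.mem_setOf_eq] at hy
    have hpos : 0 < (Finset.univ.filter fun j : Fin n => y ≤ d j).card := lt_of_lt_of_le hi hy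
    obtain ⟨j, hj⟩ := Finset.card_pos.mp hpos
    simp only [Finset.mem_filter, Finset.mem_univ, true_and] at hj
    exact le_trans hj (Finset.le_sup (Finset.mem_univ j))
  · exact h

lemma orderStat_lt {n : ℕ} (d : Fin n → ℕ) {i x : ℕ} (hx : 1 ≤ x)
    (h : (Finset.univ.filter fun j : Fin n => x ≤ d j).card < i) :
    orderStat n d i < x := by
  have hle : orderStat n d i ≤ x - 1 := by
    apply csSup_le'
    intro y hy
    simp only [Set.mem_setOf_eq] at hy
    by_contra hyx
    push_neg at hyx
    have hxy : x ≤ y := by omega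
    have hsub : (Finset.univ.filter fun j : Fin n => y ≤ d j) ⊆
        (Finset.univ.filter fun j : Fin n => x ≤ d j) :=
      by
        intro j hj
        simp only [Finset.mem_filter, Finset.mem_univ, true_and] at hj ⊢
        exact le_trans hxy hj
    have := Finset.card_le_card hsub
    omega
  omega
section Chernoff

variable {Ω : Type} [MeasurableSpace Ω] (P : Measure Ω) [IsProbabilityMeasure P]

lemma mgf_indicator_bound (d : ℕ → Ω → ℕ) (hmeas : ∀ i, Measurable (d i))
    (hind : iIndepFun d P)
    (n x : ℕ) (q t : ℝ)
    (hq : ∀ j : ℕ, (P {ω | x ≤ d j ω}).toReal = q) :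
    mgf (fun ω => ∑ j ∈ Finset.range n, (if x ≤ d j ω then (1:ℝ) else 0)) P t
      ≤ Real.exp ((n:ℝ) * q * (Real.exp t - 1)) ∧
    Integrable (fun ω => Real.exp (t * ∑ j ∈ Finset.range n, (if x ≤ d j ω then (1:ℝ) else 0))) P ∧
    0 ≤ q ∧ q ≤ 1 := by
  set X : ℕ → Ω → ℝ := fun j ω => if x ≤ d j ω then (1:ℝ) else 0 with hX
  have hset : ∀ j, MeasurableSet {ω | x ≤ d j ω} := by
    intro j
    exact hmeas j measurableSet_Ici
  have hq0 : 0 ≤ q := by rw [← hq 0]; exact ENNReal.toReal_nonneg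
  have hq1 : q ≤ 1 := by
    rw [← hq 0]
    exact ENNReal.toReal_le_of_le_ofReal zero_le_one (by simpa using prob_le_one)
  have hg : Measurable (fun k : ℕ => if x ≤ k then (1:ℝ) else 0) := measurable_from_top
  have hXmeas : ∀ j, Measurable (X j) := by
    intro j
    exact hg.comp (hmeas j)
  have hXind : iIndepFun X P :=
    hind.comp (fun _ k => if x ≤ k then (1:ℝ) else 0) (fun _ => hg)
  have hXid : ∀ j ω, Real.exp (t * X j ω) = 1 + (Real.exp t - 1) * X j ω := by
    intro j ω
    by_cases h : x ≤ d j ω <;> simp [hX, h, Real.exp_zero]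
  have hXint : ∀ j, Integrable (X j) P := by
    intro j
    have : X j = Set.indicator {ω | x ≤ d j ω} (fun _ => (1:ℝ)) := by
      funext ω
      by_cases h : x ≤ d j ω <;> simp [hX, h, Set.indicator_apply, Set.mem_setOf_eq]
    rw [this]
    exact (integrable_const (1:ℝ)).indicator (hset j)
  have hXintegral : ∀ j, ∫ ω, X j ω ∂P = q := by
    intro j
    have : X j = Set.indicator {ω | x ≤ d j ω} (fun _ => (1:ℝ)) := by
      funext ω
      by_cases h : x ≤ d j ω <;> simp [hX, h, Set.indicator_apply, Set.mem_setOf_eq]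
    rw [this, integral_indicator_const _ (hset j), measureReal_def, hq j, smul_eq_mul, mul_one]
  have hexpint : ∀ (s : ℝ) (j : ℕ), Integrable (fun ω => Real.exp (s * X j ω)) P := by
    intro s j
    have heq : (fun ω => Real.exp (s * X j ω)) = fun ω => 1 + (Real.exp s - 1) * X j ω := by
      funext ω
      by_cases h : x ≤ d j ω <;> simp [hX, h, Real.exp_zero]
    rw [heq]
    exact (integrable_const (1:ℝ)).add ((hXint j).const_mul _)
  have hmgfX : ∀ j, mgf (X j) P t = 1 + (Real.exp t - 1) * q := by
    intro j
    rw [mgf]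
    have heq : (fun ω => Real.exp (t * X j ω)) = fun ω => 1 + (Real.exp t - 1) * X j ω := by
      funext ω; exact hXid j ω
    rw [heq, integral_add (integrable_const _) ((hXint j).const_mul _),
      integral_const, integral_const_mul, hXintegral j]
    simp [measure_univ]
  have hsum_eq : (fun ω => ∑ j ∈ Finset.range n, X j ω) = ∑ j ∈ Finset.range n, X j := by
    funext ω; simp
  have hmgfS : mgf (fun ω => ∑ j ∈ Finset.range n, X j ω) P t
      = (1 + (Real.exp t - 1) * q) ^ n := by
    rw [hsum_eq, hXind.mgf_sum hXmeas (Finset.range n)]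
    simp only [hmgfX, Finset.prod_const, Finset.card_range]
  have hbase : 0 ≤ 1 + (Real.exp t - 1) * q := by
    nlinarith [Real.exp_pos t]
  refine ⟨?_, ?_, hq0, hq1⟩
  · rw [hmgfS]
    calc (1 + (Real.exp t - 1) * q) ^ n ≤ Real.exp ((Real.exp t - 1) * q) ^ n := by
          apply pow_le_pow_left₀ hbase
          have := Real.add_one_le_exp ((Real.exp t - 1) * q)
          linarith
      _ = Real.exp ((n:ℝ) * q * (Real.exp t - 1)) := by
          rw [← Real.exp_nat_mul]
          ring_nf
  · have := hXind.integrable_exp_mul_sum hXmeas (fun j (_ : j ∈ Finset.range n) => hexpint t j)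
    apply this.congr
    filter_upwards with ω
    simp [hX]

end Chernoff
section Chernoff2

variable {Ω : Type} [MeasurableSpace Ω] {P : Measure Ω} [IsProbabilityMeasure P]

lemma count_cast (n x : ℕ) (d : ℕ → Ω → ℕ) (ω : Ω) :
    ((Finset.univ.filter fun j : Fin n => x ≤ d (j:ℕ) ω).card : ℝ)
      = ∑ j ∈ Finset.range n, (if x ≤ d j ω then (1:ℝ) else 0) := by
  rw [Finset.card_filter, Finset.sum_range (f := fun j => if x ≤ d j ω then (1:ℝ) else 0)]
  push_cast
  apply Finset.sum_congr rfl
  intro j _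
  split <;> norm_num

lemma chernoff_upper (d : ℕ → Ω → ℕ) (hmeas : ∀ i, Measurable (d i))
    (hind : iIndepFun d P)
    (n x i : ℕ) (q : ℝ) (hq : ∀ j : ℕ, (P {ω | x ≤ d j ω}).toReal = q)
    (hnp : (n:ℝ) * q ≤ (i:ℝ)/2) :
    P {ω | i ≤ (Finset.univ.filter fun j : Fin n => x ≤ d (j:ℕ) ω).card}
      ≤ ENNReal.ofReal (Real.exp (-(Real.log 2 - 1/2) * i)) := by
  obtain ⟨hmgf, hint, hq0, hq1⟩ := mgf_indicator_bound P d hmeas hind n x q (Real.log 2) hq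
  set S : Ω → ℝ := fun ω => ∑ j ∈ Finset.range n, (if x ≤ d j ω then (1:ℝ) else 0) with hS
  have hev : {ω | i ≤ (Finset.univ.filter fun j : Fin n => x ≤ d (j:ℕ) ω).card}
      = {ω | (i:ℝ) ≤ S ω} := by
    ext ω
    simp only [Set.mem_setOf_eq, hS, ← count_cast n x d ω, Nat.cast_le]
  rw [hev]
  have h := measure_ge_le_exp_mul_mgf (μ := P) (X := S) (i:ℝ)
    (Real.log_nonneg one_le_two) hint
  have hchain : Real.exp (-(Real.log 2) * i) * mgf S P (Real.log 2)
      ≤ Real.exp (-(Real.log 2 - 1/2) * i) := by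
    calc Real.exp (-(Real.log 2) * i) * mgf S P (Real.log 2)
        ≤ Real.exp (-(Real.log 2) * i) * Real.exp ((n:ℝ) * q * (Real.exp (Real.log 2) - 1)) := by
          apply mul_le_mul_of_nonneg_left _ (Real.exp_pos _).le
          exact hmgf
      _ = Real.exp (-(Real.log 2) * i + (n:ℝ) * q) := by
          rw [← Real.exp_add, Real.exp_log two_pos]
          ring_nf
      _ ≤ Real.exp (-(Real.log 2 - 1/2) * i) := by
          apply Real.exp_le_exp.mpr
          nlinarith [hnp]
  rw [ENNReal.le_ofReal_iff_toReal_le (measure_ne_top _ _) (Real.exp_pos _).le]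
  exact le_trans h hchain

lemma chernoff_lower (d : ℕ → Ω → ℕ) (hmeas : ∀ i, Measurable (d i))
    (hind : iIndepFun d P)
    (n x i : ℕ) (q : ℝ) (hq : ∀ j : ℕ, (P {ω | x ≤ d j ω}).toReal = q)
    (hnp : 2 * (i:ℝ) ≤ (n:ℝ) * q) :
    P {ω | (Finset.univ.filter fun j : Fin n => x ≤ d (j:ℕ) ω).card < i}
      ≤ ENNReal.ofReal (Real.exp (-(Real.log 2 - 1/2) * i)) := by
  obtain ⟨hmgf, hint, hq0, hq1⟩ := mgf_indicator_bound P d hmeas hind n x q (-(Real.log 2)) hq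
  set S : Ω → ℝ := fun ω => ∑ j ∈ Finset.range n, (if x ≤ d j ω then (1:ℝ) else 0) with hS
  have hev : {ω | (Finset.univ.filter fun j : Fin n => x ≤ d (j:ℕ) ω).card < i}
      ⊆ {ω | S ω ≤ (i:ℝ)} := by
    intro ω hω
    simp only [Set.mem_setOf_eq] at hω ⊢
    show S ω ≤ (i:ℝ)
    rw [hS]
    simp only []
    rw [← count_cast n x d ω]
    exact_mod_cast Nat.le_of_lt hω
  apply le_trans (measure_mono hev)
  have h := measure_le_le_exp_mul_mgf (μ := P) (X := S) (i:ℝ)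
    (neg_nonpos.mpr (Real.log_nonneg one_le_two)) hint
  have hlog2 : Real.log 2 < 0.6931471808 := Real.log_two_lt_d9
  have hi0 : (0:ℝ) ≤ (i:ℝ) := Nat.cast_nonneg i
  have hchain : Real.exp (Real.log 2 * i) * mgf S P (-(Real.log 2))
      ≤ Real.exp (-(Real.log 2 - 1/2) * i) := by
    calc Real.exp (Real.log 2 * i) * mgf S P (-(Real.log 2))
        ≤ Real.exp (Real.log 2 * i) * Real.exp ((n:ℝ) * q * (Real.exp (-(Real.log 2)) - 1)) := by
          apply mul_le_mul_of_nonneg_left hmgf (Real.exp_pos _).le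
      _ = Real.exp (Real.log 2 * i + (n:ℝ) * q * (1/2 - 1)) := by
          rw [← Real.exp_add, Real.exp_neg, Real.exp_log two_pos]
          norm_num
      _ ≤ Real.exp (-(Real.log 2 - 1/2) * i) := by
          apply Real.exp_le_exp.mpr
          nlinarith [hnp, hi0, hlog2]
  rw [ENNReal.le_ofReal_iff_toReal_le (measure_ne_top _ _) (Real.exp_pos _).le]
  refine le_trans h ?_
  rw [neg_neg]
  exact hchain

end Chernoff2
lemma t_pow_eq {τ : ℝ} (hτ : 2 < τ) {n i : ℕ} (hi1 : 1 ≤ i) (hin : i ≤ n) :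
    (((n:ℝ)/i) ^ (1/(τ-1))) ^ (1-τ) = (i:ℝ)/n := by
  have hi0 : (0:ℝ) < i := by exact_mod_cast hi1
  have hn0 : (0:ℝ) < n := lt_of_lt_of_le hi0 (by exact_mod_cast hin)
  have hdiv : (0:ℝ) ≤ (n:ℝ)/i := by positivity
  rw [← Real.rpow_mul hdiv]
  have hne : τ - 1 ≠ 0 := by linarith
  have hexp : 1/(τ-1) * (1-τ) = -1 := by
    field_simp
    ring
  rw [hexp, Real.rpow_neg_one, inv_div]

lemma one_le_t {τ : ℝ} (hτ : 2 < τ) {n i : ℕ} (hi1 : 1 ≤ i) (hin : i ≤ n) :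
    1 ≤ ((n:ℝ)/i) ^ (1/(τ-1)) := by
  have hi0 : (0:ℝ) < i := by exact_mod_cast hi1
  have h1 : (1:ℝ) ≤ (n:ℝ)/i := by
    rw [le_div_iff₀ hi0, one_mul]
    exact_mod_cast hin
  have hβ : (0:ℝ) < τ - 1 := by linarith
  exact Real.one_le_rpow h1 (by positivity)

lemma upper_np {τ : ℝ} (hτ : 2 < τ) {b c₂ : ℝ} (hb : 0 < b)
    (hc₂3 : 3 ≤ c₂) (hc₂b : (2*b)^(1/(τ-1)) ≤ c₂)
    {n i x₂ : ℕ} (hi1 : 1 ≤ i) (hin : i ≤ n)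
    (hx₂ : c₂ * ((n:ℝ)/i) ^ (1/(τ-1)) < (x₂:ℝ)) :
    (n:ℝ) * (b * (x₂:ℝ) ^ (1-τ)) ≤ (i:ℝ)/2 := by
  have hi0 : (0:ℝ) < i := by exact_mod_cast hi1
  have hn0 : (0:ℝ) < n := lt_of_lt_of_le hi0 (by exact_mod_cast hin)
  set t : ℝ := ((n:ℝ)/i) ^ (1/(τ-1)) with htdef
  have ht1 : 1 ≤ t := one_le_t hτ hi1 hin
  have hct : 0 < c₂ * t := by nlinarith
  have h1 : (x₂:ℝ) ^ (1-τ) ≤ (c₂ * t) ^ (1-τ) :=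
    Real.rpow_le_rpow_of_nonpos hct (le_of_lt hx₂) (by linarith)
  have h2 : (c₂ * t) ^ (1-τ) = c₂ ^ (1-τ) * ((i:ℝ)/n) := by
    rw [Real.mul_rpow (by linarith : (0:ℝ) ≤ c₂) (by positivity : (0:ℝ) ≤ t), htdef,
      t_pow_eq hτ hi1 hin]
  have h3 : c₂ ^ (1-τ) ≤ (2*b)⁻¹ := by
    have hβ : (0:ℝ) < τ - 1 := by linarith
    have h2b : (0:ℝ) < 2*b := by linarith
    have hcpow : 2*b ≤ c₂ ^ (τ-1) := by
      calc 2*b = ((2*b) ^ (1/(τ-1))) ^ (τ-1) := by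
            rw [← Real.rpow_mul h2b.le]
            have hne : τ - 1 ≠ 0 := by linarith
            have h11 : 1/(τ-1) * (τ-1) = 1 := by field_simp
            rw [h11, Real.rpow_one]
        _ ≤ c₂ ^ (τ-1) :=
            Real.rpow_le_rpow (Real.rpow_nonneg h2b.le _) hc₂b hβ.le
    have hc₂pos : (0:ℝ) < c₂ := by linarith
    have : c₂ ^ (1-τ) = (c₂ ^ (τ-1))⁻¹ := by
      rw [← Real.rpow_neg hc₂pos.le]
      congr 1
      ring
    rw [this]
    apply inv_anti₀ h2b hcpow
  have hbc : b * c₂ ^ (1-τ) ≤ 1/2 := by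
    calc b * c₂ ^ (1-τ) ≤ b * (2*b)⁻¹ := by
          apply mul_le_mul_of_nonneg_left h3 hb.le
      _ = 1/2 := by field_simp
  calc (n:ℝ) * (b * (x₂:ℝ) ^ (1-τ)) ≤ (n:ℝ) * (b * (c₂ ^ (1-τ) * ((i:ℝ)/n))) := by
        rw [← h2]
        apply mul_le_mul_of_nonneg_left (mul_le_mul_of_nonneg_left h1 hb.le) hn0.le
    _ = (b * c₂ ^ (1-τ)) * i := by field_simp
    _ ≤ (1/2) * i := mul_le_mul_of_nonneg_right hbc hi0.le
    _ = (i:ℝ)/2 := by ring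

lemma lower_np {τ : ℝ} (hτ : 2 < τ) {a c₁ : ℝ} (ha : 0 < a)
    (hc₁ : c₁ = (3/4) * (a/2) ^ (1/(τ-1)))
    {n i x₁ : ℕ} (hi1 : 1 ≤ i) (hin : i ≤ n)
    (hx₁u : (x₁:ℝ) ≤ c₁ * ((n:ℝ)/i) ^ (1/(τ-1)) + 1)
    (hx₁l : 3 < c₁ * ((n:ℝ)/i) ^ (1/(τ-1)))
    (hx₁pos : 1 ≤ x₁) :
    2 * (i:ℝ) ≤ (n:ℝ) * (a * (x₁:ℝ) ^ (1-τ)) := by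
  have hi0 : (0:ℝ) < i := by exact_mod_cast hi1
  have hn0 : (0:ℝ) < n := lt_of_lt_of_le hi0 (by exact_mod_cast hin)
  set t : ℝ := ((n:ℝ)/i) ^ (1/(τ-1)) with htdef
  have hx₁0 : (0:ℝ) < (x₁:ℝ) := by exact_mod_cast hx₁pos
  have hub : (x₁:ℝ) ≤ (4/3) * (c₁ * t) := by nlinarith
  have h1 : ((4/3) * (c₁ * t)) ^ (1-τ) ≤ (x₁:ℝ) ^ (1-τ) :=
    Real.rpow_le_rpow_of_nonpos hx₁0 hub (by linarith)
  have hc₁t : (4/3) * c₁ = (a/2) ^ (1/(τ-1)) := by rw [hc₁]; ring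
  have ht0 : (0:ℝ) < t := Real.rpow_pos_of_pos (by positivity) _
  have hc₁0 : (0:ℝ) < c₁ := by nlinarith
  have h2 : ((4/3) * (c₁ * t)) ^ (1-τ) = (2/a) * ((i:ℝ)/n) := by
    have : (4/3) * (c₁ * t) = ((4/3)*c₁) * t := by ring
    rw [this, Real.mul_rpow (by nlinarith : (0:ℝ) ≤ (4/3)*c₁) ht0.le, htdef,
      t_pow_eq hτ hi1 hin, hc₁t, ← Real.rpow_mul (by positivity : (0:ℝ) ≤ a/2)]
    have hne : τ - 1 ≠ 0 := by linarith
    have hexp : 1/(τ-1) * (1-τ) = -1 := by field_simp; ring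
    rw [hexp, Real.rpow_neg_one]
    congr 1
    field_simp
  calc 2 * (i:ℝ) = (n:ℝ) * (a * ((2/a) * ((i:ℝ)/n))) := by field_simp
    _ ≤ (n:ℝ) * (a * (x₁:ℝ) ^ (1-τ)) := by
        rw [← h2] at *
        apply mul_le_mul_of_nonneg_left (mul_le_mul_of_nonneg_left h1 ha.le) hn0.le
lemma geom_tail_bound {c0 : ℝ} (hc0 : 0 < c0) (m n : ℕ) :
    ∑ i ∈ Finset.Icc m n, 2 * Real.exp (-c0 * i)
      ≤ 2 * (1 - Real.exp (-c0))⁻¹ * Real.exp (-c0 * m) := by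
  set r : ℝ := Real.exp (-c0) with hr_def
  have hr0 : 0 < r := Real.exp_pos _
  have hr1 : r < 1 := by
    rw [hr_def]
    exact Real.exp_lt_one_iff.mpr (by linarith)
  have hterm : ∀ i : ℕ, Real.exp (-c0 * i) = r ^ i := by
    intro i
    rw [hr_def, ← Real.exp_nat_mul]
    ring_nf
  have h1 : ∑ i ∈ Finset.Icc m n, 2 * Real.exp (-c0 * i)
      = 2 * r ^ m * ∑ k ∈ Finset.range (n + 1 - m), r ^ k := by
    rw [Finset.mul_sum, ← Finset.Ico_add_one_right_eq_Icc, Finset.sum_Ico_eq_sum_range]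
    apply Finset.sum_congr rfl
    intro k _
    rw [hterm, pow_add]
    ring
  rw [h1, hterm]
  have h2 : ∑ k ∈ Finset.range (n + 1 - m), r ^ k ≤ (1 - r)⁻¹ := by
    calc ∑ k ∈ Finset.range (n + 1 - m), r ^ k
        ≤ ∑' k : ℕ, r ^ k :=
          Summable.sum_le_tsum _ (fun k _ => pow_nonneg hr0.le k)
            (summable_geometric_of_lt_one hr0.le hr1)
      _ = (1 - r)⁻¹ := tsum_geometric_of_lt_one hr0.le hr1
  have hrm : (0:ℝ) ≤ r ^ m := pow_nonneg hr0.le m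
  calc 2 * r ^ m * ∑ k ∈ Finset.range (n + 1 - m), r ^ k
      ≤ 2 * r ^ m * (1 - r)⁻¹ := by
        apply mul_le_mul_of_nonneg_left h2 (by positivity)
    _ = 2 * (1 - r)⁻¹ * r ^ m := by ring
/-- Order-statistics bounds for `n` i.i.d. power-law degrees: for `τ > 2`, there are
constants `c₁, c₂ > 0` depending only on `τ` such that for every `ε ∈ (0, 1/(2τ−1))`
and all sufficiently large `n`, with probability at least `1 − exp(−n^{ε/3})`,
`c₁ (n/i)^{1/(τ−1)} ≤ d⁽ⁱ⁾ ≤ c₂ (n/i)^{1/(τ−1)}` for every `⌈n^ε⌉ ≤ i ≤ n`. -/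
theorem powerLaw_orderStat_bounds (τ : ℝ) (hτ : 2 < τ) :
    ∃ c₁ c₂ : ℝ, 0 < c₁ ∧ 0 < c₂ ∧
      ∀ ε ∈ Set.Ioo (0 : ℝ) (1 / (2 * τ - 1)), ∃ N : ℕ, ∀ n : ℕ, N ≤ n →
      ∀ (Ω : Type) (mΩ : MeasurableSpace Ω) (P : Measure Ω), IsProbabilityMeasure P →
      ∀ d : ℕ → Ω → ℕ,
      (∀ i, Measurable (d i)) →
      iIndepFun d P →
      (∀ i, ∀ k : ℕ, k < 3 → P {ω | d i ω = k} = 0) →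
      (∀ i, ∀ k : ℕ, 3 ≤ k →
          P {ω | d i ω = k} = ENNReal.ofReal (Ctau τ * (k : ℝ) ^ (-τ))) →
      1 - ENNReal.ofReal (Real.exp (-(n : ℝ) ^ (ε / 3))) ≤
        P {ω | ∀ i : ℕ, ⌈(n : ℝ) ^ ε⌉₊ ≤ i → i ≤ n →
          c₁ * ((n : ℝ) / i) ^ (1 / (τ - 1)) ≤ (orderStat n (fun j => d (j : ℕ) ω) i : ℝ) ∧
          (orderStat n (fun j => d (j : ℕ) ω) i : ℝ) ≤ c₂ * ((n : ℝ) / i) ^ (1 / (τ - 1))} := by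
  have hβ : (0:ℝ) < τ - 1 := by linarith
  have hC := Ctau_pos (by linarith : 1 < τ)
  have ha : (0:ℝ) < Ctau τ * (τ-1)⁻¹ := by positivity
  have hb : (0:ℝ) < Ctau τ * (1 + (τ-1)⁻¹) := by positivity
  set a : ℝ := Ctau τ * (τ-1)⁻¹ with ha_def
  set b : ℝ := Ctau τ * (1 + (τ-1)⁻¹) with hb_def
  set c₁ : ℝ := (3/4) * (a/2) ^ (1/(τ-1)) with hc₁_def
  set c₂ : ℝ := max 3 ((2*b) ^ (1/(τ-1))) with hc₂_def
  have hc₁pos : 0 < c₁ := by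
    rw [hc₁_def]
    have := Real.rpow_pos_of_pos (by positivity : (0:ℝ) < a/2) (1/(τ-1))
    positivity
  have hc₂3 : (3:ℝ) ≤ c₂ := le_max_left _ _
  have hc₂b : (2*b) ^ (1/(τ-1)) ≤ c₂ := le_max_right _ _
  have hc₂pos : 0 < c₂ := lt_of_lt_of_le (by norm_num) hc₂3
  refine ⟨c₁, c₂, hc₁pos, hc₂pos, ?_⟩
  rintro ε ⟨hε0, hε1⟩
  have hc0 : (0:ℝ) < Real.log 2 - 1/2 := by
    have := Real.log_two_gt_d9
    linarith
  set r : ℝ := Real.exp (-(Real.log 2 - 1/2)) with hr_def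
  have hr1 : r < 1 := Real.exp_lt_one_iff.mpr (by linarith)
  have hr0 : 0 < r := Real.exp_pos _
  set K : ℝ := 2 * (1 - r)⁻¹ with hK_def
  have hK : 0 < K := by
    rw [hK_def]
    have : 0 < 1 - r := by linarith
    positivity
  -- choice of N
  have htendR : Filter.Tendsto (fun x : ℝ => (Real.log 2 - 1/2) * x ^ ε - x ^ (ε/3))
      Filter.atTop Filter.atTop := by
    have h1 : Filter.Tendsto (fun x : ℝ => x ^ (ε/3) * ((Real.log 2 - 1/2) * x ^ (2*ε/3) - 1))
        Filter.atTop Filter.atTop := by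
      apply Filter.Tendsto.atTop_mul_atTop₀ (tendsto_rpow_atTop (by linarith))
      apply Filter.tendsto_atTop_add_const_right
      exact Filter.Tendsto.const_mul_atTop hc0 (tendsto_rpow_atTop (by linarith))
    apply h1.congr'
    filter_upwards [Filter.eventually_gt_atTop (0:ℝ)] with x hx
    have hxε : x ^ (ε/3) * x ^ (2*ε/3) = x ^ ε := by
      rw [← Real.rpow_add hx]
      ring_nf
    rw [mul_sub, mul_one, mul_left_comm, hxε]
  have htend : Filter.Tendsto (fun n : ℕ => (Real.log 2 - 1/2) * (n:ℝ) ^ ε - (n:ℝ) ^ (ε/3))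
      Filter.atTop Filter.atTop := htendR.comp tendsto_natCast_atTop_atTop
  have hev := (htend.eventually_ge_atTop (Real.log K)).and (Filter.eventually_ge_atTop 1)
  obtain ⟨N, hN⟩ := Filter.eventually_atTop.mp hev
  refine ⟨N, ?_⟩
  intro n hn Ω mΩ P hP d hdmeas hdind hdlow hdpmf
  obtain ⟨hlogK, hn1⟩ := hN n hn
  have hn0 : (0:ℝ) < n := by exact_mod_cast hn1
  set m : ℕ := ⌈(n:ℝ) ^ ε⌉₊ with hm_def
  have hm1 : 1 ≤ m := by
    rw [hm_def]
    exact Nat.one_le_ceil_iff.mpr (Real.rpow_pos_of_pos hn0 ε)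
  set t : ℕ → ℝ := fun i => ((n:ℝ)/i) ^ (1/(τ-1)) with ht_def
  set x₁ : ℕ → ℕ := fun i => ⌈c₁ * t i⌉₊ with hx₁_def
  set x₂ : ℕ → ℕ := fun i => ⌊c₂ * t i⌋₊ + 1 with hx₂_def
  -- basic facts for i in range
  have hfacts : ∀ i ∈ Finset.Icc m n, 1 ≤ i ∧ i ≤ n ∧ 1 ≤ t i ∧ 0 < c₂ * t i ∧
      c₂ * t i < (x₂ i : ℝ) ∧ 4 ≤ x₂ i := by
    intro i hi
    rw [Finset.mem_Icc] at hi
    have hi1 : 1 ≤ i := le_trans hm1 hi.1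
    have hti : 1 ≤ t i := one_le_t hτ hi1 hi.2
    have hct : 0 < c₂ * t i := by nlinarith
    have hx₂gt : c₂ * t i < (x₂ i : ℝ) := by
      rw [hx₂_def]
      push_cast
      exact Nat.lt_floor_add_one _
    have hx₂4 : 4 ≤ x₂ i := by
      have h3 : (3:ℝ) < (x₂ i : ℝ) := by nlinarith
      have h3' : (3:ℕ) < x₂ i := by exact_mod_cast h3
      omega
    exact ⟨hi1, hi.2, hti, hct, hx₂gt, hx₂4⟩
  -- identical tail probabilities
  have hqeq : ∀ x : ℕ, 3 ≤ x → ∀ j : ℕ, P {ω | x ≤ d j ω} = P {ω | x ≤ d 0 ω} := by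
    intro x hx j
    rw [tailProb_eq P (d j) (hdmeas j) (hdpmf j) x hx,
      tailProb_eq P (d 0) (hdmeas 0) (hdpmf 0) x hx]
  -- upper-tail bound for each i
  have hU : ∀ i ∈ Finset.Icc m n,
      P {ω | i ≤ (Finset.univ.filter fun j : Fin n => x₂ i ≤ d (j:ℕ) ω).card}
        ≤ ENNReal.ofReal (Real.exp (-(Real.log 2 - 1/2) * i)) := by
    intro i hi
    obtain ⟨hi1, hin, hti, hct, hx₂gt, hx₂4⟩ := hfacts i hi
    have hx₂3 : 3 ≤ x₂ i := by omega
    set q : ℝ := (P {ω | x₂ i ≤ d 0 ω}).toReal with hq_def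
    have hq : ∀ j : ℕ, (P {ω | x₂ i ≤ d j ω}).toReal = q := by
      intro j
      rw [hq_def, hqeq (x₂ i) hx₂3 j]
    have hqb : q ≤ b * (x₂ i : ℝ) ^ (1-τ) := by
      have h := (tailProb_bounds hτ P (d 0) (hdmeas 0) (hdpmf 0) (x₂ i) hx₂3).2
      have := ENNReal.toReal_mono ENNReal.ofReal_ne_top h
      rwa [ENNReal.toReal_ofReal (by positivity)] at this
    have hnp : (n:ℝ) * q ≤ (i:ℝ)/2 := by
      calc (n:ℝ) * q ≤ (n:ℝ) * (b * (x₂ i : ℝ) ^ (1-τ)) :=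
            mul_le_mul_of_nonneg_left hqb hn0.le
        _ ≤ (i:ℝ)/2 := upper_np hτ hb hc₂3 hc₂b hi1 hin hx₂gt
    exact chernoff_upper d hdmeas hdind n (x₂ i) i q hq hnp
  -- lower-tail bound for each i
  have hL : ∀ i ∈ Finset.Icc m n,
      P {ω | (Finset.univ.filter fun j : Fin n => x₁ i ≤ d (j:ℕ) ω).card < i}
        ≤ ENNReal.ofReal (Real.exp (-(Real.log 2 - 1/2) * i)) := by
    intro i hi
    obtain ⟨hi1, hin, hti, hct, hx₂gt, hx₂4⟩ := hfacts i hi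
    by_cases h4 : 4 ≤ x₁ i
    · -- Chernoff case
      have hx₁3 : 3 ≤ x₁ i := by omega
      have hx₁1 : 1 ≤ x₁ i := by omega
      set q : ℝ := (P {ω | x₁ i ≤ d 0 ω}).toReal with hq_def
      have hq : ∀ j : ℕ, (P {ω | x₁ i ≤ d j ω}).toReal = q := by
        intro j
        rw [hq_def, hqeq (x₁ i) hx₁3 j]
      have hqa : a * (x₁ i : ℝ) ^ (1-τ) ≤ q := by
        have h := (tailProb_bounds hτ P (d 0) (hdmeas 0) (hdpmf 0) (x₁ i) hx₁3).1
        have := ENNReal.toReal_mono (measure_ne_top P _) h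
        rwa [ENNReal.toReal_ofReal (by positivity)] at this
      have hx₁u : (x₁ i : ℝ) ≤ c₁ * t i + 1 := by
        rw [hx₁_def]
        exact le_of_lt (Nat.ceil_lt_add_one (by positivity))
      have hx₁l : 3 < c₁ * t i := by
        have := Nat.lt_ceil.mp (show 3 < x₁ i by omega)
        exact_mod_cast this
      have hnp : 2 * (i:ℝ) ≤ (n:ℝ) * q := by
        calc 2 * (i:ℝ) ≤ (n:ℝ) * (a * (x₁ i : ℝ) ^ (1-τ)) :=
              lower_np hτ ha hc₁_def hi1 hin hx₁u hx₁l hx₁1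
          _ ≤ (n:ℝ) * q := mul_le_mul_of_nonneg_left hqa hn0.le
      exact chernoff_lower d hdmeas hdind n (x₁ i) i q hq hnp
    · -- null case: x₁ i ≤ 3
      have hx₁le3 : x₁ i ≤ 3 := by omega
      have hnull : P {ω | (Finset.univ.filter fun j : Fin n => x₁ i ≤ d (j:ℕ) ω).card < i} = 0 := by
        have hsub : {ω | (Finset.univ.filter fun j : Fin n => x₁ i ≤ d (j:ℕ) ω).card < i}
            ⊆ ⋃ j ∈ Finset.range n, {ω | d j ω < 3} := by
          intro ω hω
          simp only [Set.mem_setOf_eq] at hω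
          by_contra hmem
          simp only [Set.mem_iUnion, Set.mem_setOf_eq, not_exists, not_lt] at hmem
          have huniv : (Finset.univ.filter fun j : Fin n => x₁ i ≤ d (j:ℕ) ω) = Finset.univ := by
            apply Finset.filter_true_of_mem
            intro j _
            have h3 := hmem (j:ℕ) (Finset.mem_range.mpr j.isLt)
            omega
          rw [huniv, Finset.card_univ, Fintype.card_fin] at hω
          omega
        apply le_antisymm _ zero_le
        calc P _ ≤ P (⋃ j ∈ Finset.range n, {ω | d j ω < 3}) := measure_mono hsub
          _ ≤ ∑ j ∈ Finset.range n, P {ω | d j ω < 3} := measure_biUnion_finset_le _ _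
          _ = 0 := by
              apply Finset.sum_eq_zero
              intro j _
              exact lt_three_null P (d j) (hdlow j)
      rw [hnull]
      exact zero_le
  -- measurability of count events
  have hcntmeas : ∀ x : ℕ, Measurable (fun ω =>
      (Finset.univ.filter fun j : Fin n => x ≤ d (j:ℕ) ω).card) := by
    intro x
    have : (fun ω => (Finset.univ.filter fun j : Fin n => x ≤ d (j:ℕ) ω).card)
        = fun ω => ∑ j : Fin n, (if x ≤ d (j:ℕ) ω then 1 else 0) := by
      funext ω
      rw [Finset.card_filter]
    rw [this]
    apply Finset.measurable_sum
    intro j _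
    exact (measurable_from_top (f := fun k : ℕ => if x ≤ k then (1:ℕ) else 0)).comp
      (hdmeas (j:ℕ))
  set bad : Set Ω := ⋃ i ∈ Finset.Icc m n,
      ({ω | i ≤ (Finset.univ.filter fun j : Fin n => x₂ i ≤ d (j:ℕ) ω).card}
        ∪ {ω | (Finset.univ.filter fun j : Fin n => x₁ i ≤ d (j:ℕ) ω).card < i}) with hbad_def
  have hbadmeas : MeasurableSet bad := by
    apply Set.Finite.measurableSet_biUnion (Finset.finite_toSet _)
    intro i _
    exact ((hcntmeas (x₂ i) measurableSet_Ici).union ((hcntmeas (x₁ i)) measurableSet_Iio))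
  -- total bad probability
  have hbad : P bad ≤ ENNReal.ofReal (Real.exp (-(n:ℝ) ^ (ε/3))) := by
    calc P bad ≤ ∑ i ∈ Finset.Icc m n,
        P ({ω | i ≤ (Finset.univ.filter fun j : Fin n => x₂ i ≤ d (j:ℕ) ω).card}
          ∪ {ω | (Finset.univ.filter fun j : Fin n => x₁ i ≤ d (j:ℕ) ω).card < i}) :=
          measure_biUnion_finset_le _ _
      _ ≤ ∑ i ∈ Finset.Icc m n, ENNReal.ofReal (2 * Real.exp (-(Real.log 2 - 1/2) * i)) := by
          apply Finset.sum_le_sum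
          intro i hi
          calc P _ ≤ P {ω | i ≤ (Finset.univ.filter fun j : Fin n => x₂ i ≤ d (j:ℕ) ω).card}
              + P {ω | (Finset.univ.filter fun j : Fin n => x₁ i ≤ d (j:ℕ) ω).card < i} :=
                measure_union_le _ _
            _ ≤ ENNReal.ofReal (Real.exp (-(Real.log 2 - 1/2) * i))
              + ENNReal.ofReal (Real.exp (-(Real.log 2 - 1/2) * i)) :=
                add_le_add (hU i hi) (hL i hi)
            _ = ENNReal.ofReal (2 * Real.exp (-(Real.log 2 - 1/2) * i)) := by
                rw [← ENNReal.ofReal_add (Real.exp_pos _).le (Real.exp_pos _).le]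
                ring_nf
      _ = ENNReal.ofReal (∑ i ∈ Finset.Icc m n, 2 * Real.exp (-(Real.log 2 - 1/2) * i)) :=
          (ENNReal.ofReal_sum_of_nonneg (fun i _ => by positivity)).symm
      _ ≤ ENNReal.ofReal (Real.exp (-(n:ℝ) ^ (ε/3))) := by
          apply ENNReal.ofReal_le_ofReal
          calc ∑ i ∈ Finset.Icc m n, 2 * Real.exp (-(Real.log 2 - 1/2) * i)
              ≤ K * Real.exp (-(Real.log 2 - 1/2) * m) := by
                have := geom_tail_bound hc0 m n
                rw [hK_def, hr_def]
                exact this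
            _ ≤ K * Real.exp (-(Real.log 2 - 1/2) * (n:ℝ) ^ ε) := by
                apply mul_le_mul_of_nonneg_left _ hK.le
                apply Real.exp_le_exp.mpr
                have hmge : (n:ℝ) ^ ε ≤ (m:ℝ) := Nat.le_ceil _
                nlinarith
            _ ≤ Real.exp (-(n:ℝ) ^ (ε/3)) := by
                have hKle : K ≤ Real.exp ((Real.log 2 - 1/2) * (n:ℝ) ^ ε - (n:ℝ) ^ (ε/3)) := by
                  calc K = Real.exp (Real.log K) := (Real.exp_log hK).symm
                    _ ≤ _ := Real.exp_le_exp.mpr hlogK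
                calc K * Real.exp (-(Real.log 2 - 1/2) * (n:ℝ) ^ ε)
                    ≤ Real.exp ((Real.log 2 - 1/2) * (n:ℝ) ^ ε - (n:ℝ) ^ (ε/3))
                      * Real.exp (-(Real.log 2 - 1/2) * (n:ℝ) ^ ε) :=
                      mul_le_mul_of_nonneg_right hKle (Real.exp_pos _).le
                  _ = Real.exp (-(n:ℝ) ^ (ε/3)) := by
                      rw [← Real.exp_add]
                      ring_nf
  -- inclusion of the complement in the good event
  have hincl : badᶜ ⊆ {ω | ∀ i : ℕ, m ≤ i → i ≤ n →
      c₁ * ((n:ℝ)/i) ^ (1/(τ-1)) ≤ (orderStat n (fun j => d (j:ℕ) ω) i : ℝ) ∧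
      (orderStat n (fun j => d (j:ℕ) ω) i : ℝ) ≤ c₂ * ((n:ℝ)/i) ^ (1/(τ-1))} := by
    intro ω hω
    simp only [hbad_def, Set.mem_compl_iff, Set.mem_iUnion, Set.mem_union, Set.mem_setOf_eq,
      not_exists, not_or, not_le, not_lt] at hω
    intro i him hin
    have hiIcc : i ∈ Finset.Icc m n := Finset.mem_Icc.mpr ⟨him, hin⟩
    obtain ⟨hi1, hin', hti, hct, hx₂gt, hx₂4⟩ := hfacts i hiIcc
    obtain ⟨hUω, hLω⟩ := hω i hiIcc
    constructor
    · -- lower bound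
      have hstat := orderStat_ge (fun j : Fin n => d (j:ℕ) ω) hi1 hLω
      calc c₁ * ((n:ℝ)/i) ^ (1/(τ-1)) = c₁ * t i := rfl
        _ ≤ (x₁ i : ℝ) := Nat.le_ceil _
        _ ≤ (orderStat n (fun j => d (j:ℕ) ω) i : ℝ) := by exact_mod_cast hstat
    · -- upper bound
      have hstat := orderStat_lt (fun j : Fin n => d (j:ℕ) ω) (i := i)
        (x := x₂ i) (by omega) hUω
      have hx2e : x₂ i = ⌊c₂ * t i⌋₊ + 1 := rfl
      have hle : orderStat n (fun j => d (j:ℕ) ω) i ≤ ⌊c₂ * t i⌋₊ := by omega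
      calc (orderStat n (fun j => d (j:ℕ) ω) i : ℝ) ≤ (⌊c₂ * t i⌋₊ : ℝ) := by exact_mod_cast hle
        _ ≤ c₂ * t i := Nat.floor_le hct.le
        _ = c₂ * ((n:ℝ)/i) ^ (1/(τ-1)) := rfl
  calc 1 - ENNReal.ofReal (Real.exp (-(n:ℝ) ^ (ε/3)))
      ≤ 1 - P bad := tsub_le_tsub_left hbad 1
    _ = P badᶜ := (prob_compl_eq_one_sub hbadmeas).symm
    _ ≤ P _ := measure_mono hincl
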